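/- Let p, q ∈ [0,1] with pq < 1 and let M be the 4×4 complex matrix M = (1/(2(1-pq)))·[[(1-p), 0, 0, (1-p)(1-2q)], [0, p(1-q), p(1-q), 0], [0, p(1-q), p(1-q), 0], [(1-p)(1-2q), 0, 0, (1-p)]] (rows/columns indexed by 00,01,10,11). Then the characteristic polynomial of M factors as χ_M(X) = X · (X − (1-p)(1-q)/(1-pq)) · (X − (1-p)q/(1-pq)) · (X − p(1-q)/(1-pq)); in particular the eigenvalues of M are (1-p)(1-q)/(1-pq), p(1-q)/(1-pq), (1-p)q/(1-pq), and 0. -/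

import Mathlib

open Matrix Polynomial

noncomputable section

/-- The Choi matrix of the heralded quantum-switch channel, written explicitly in the
ordered basis 00, 01, 10, 11. -/
def M (p q : ℝ) : Matrix (Fin 4) (Fin 4) ℂ :=
  (1 / (2 * (1 - (p * q : ℝ))) : ℂ) •
    !![((1 - p : ℝ) : ℂ), 0, 0, (((1 - p) * (1 - 2 * q) : ℝ) : ℂ);
       0, ((p * (1 - q) : ℝ) : ℂ), ((p * (1 - q) : ℝ) : ℂ), 0;
       0, ((p * (1 - q) : ℝ) : ℂ), ((p * (1 - q) : ℝ) : ℂ), 0;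
       (((1 - p) * (1 - 2 * q) : ℝ) : ℂ), 0, 0, ((1 - p : ℝ) : ℂ)]

lemma charpoly_special (a b c : ℂ) :
    (!![a,0,0,b; 0,c,c,0; 0,c,c,0; b,0,0,a] : Matrix (Fin 4) (Fin 4) ℂ).charpoly
      = ((X - C a)^2 - (C b)^2) * ((X - C c)^2 - (C c)^2) := by
  rw [Matrix.charpoly]
  simp [Matrix.det_succ_row_zero, Fin.sum_univ_succ, charmatrix_apply, Matrix.one_apply,
    Matrix.diagonal_apply, Fin.succAbove]
  ring

lemma spec_iff_charpoly {n : ℕ} (A : Matrix (Fin n) (Fin n) ℂ) (μ : ℂ) :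
    μ ∈ spectrum ℂ A ↔ A.charpoly.eval μ = 0 := by
  rw [spectrum.mem_iff, Matrix.isUnit_iff_isUnit_det, isUnit_iff_ne_zero, not_not,
    Matrix.charpoly, ← Polynomial.coe_evalRingHom, RingHom.map_det]
  congr! 2
  ext i j
  simp [charmatrix_apply, Matrix.algebraMap_matrix_apply, Matrix.one_apply, diagonal,
    Matrix.sub_apply]
  split <;> simp [*]

theorem choi_matrix_charpoly_and_eigenvalues (p q : ℝ) (hp : p ∈ Set.Icc (0:ℝ) 1)
    (hq : q ∈ Set.Icc (0:ℝ) 1) (hpq : p * q < 1) :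
    (M p q).charpoly =
      X * (X - C (((1 - p) * (1 - q) / (1 - p * q) : ℝ) : ℂ)) *
        (X - C (((1 - p) * q / (1 - p * q) : ℝ) : ℂ)) *
        (X - C ((p * (1 - q) / (1 - p * q) : ℝ) : ℂ)) ∧
    spectrum ℂ (M p q) =
      {(((1 - p) * (1 - q) / (1 - p * q) : ℝ) : ℂ),
       ((p * (1 - q) / (1 - p * q) : ℝ) : ℂ),
       (((1 - p) * q / (1 - p * q) : ℝ) : ℂ), 0} := by
  have hneR : (1 - p * q : ℝ) ≠ 0 := sub_ne_zero.mpr hpq.ne'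
  have hne : ((1 - p * q : ℝ) : ℂ) ≠ 0 := by exact_mod_cast hneR
  have hne' : (1 - (p:ℂ) * (q:ℂ)) ≠ 0 := by push_cast at hne; exact hne
  set k : ℂ := 1 / (2 * (1 - (p * q : ℝ)) : ℂ) with hk
  set a : ℂ := k * ((1 - p : ℝ) : ℂ) with ha
  set b : ℂ := k * (((1 - p) * (1 - 2 * q) : ℝ) : ℂ) with hb
  set c : ℂ := k * ((p * (1 - q) : ℝ) : ℂ) with hc
  have hM : M p q = !![a,0,0,b; 0,c,c,0; 0,c,c,0; b,0,0,a] := by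
    ext i j
    fin_cases i <;> fin_cases j <;>
      simp [M, ha, hb, hc, hk]
  have h1 : a + b = (((1 - p) * (1 - q) / (1 - p * q) : ℝ) : ℂ) := by
    rw [ha, hb, hk]
    push_cast
    field_simp [hne']
    ring
  have h2 : a - b = (((1 - p) * q / (1 - p * q) : ℝ) : ℂ) := by
    rw [ha, hb, hk]
    push_cast
    field_simp [hne']
    ring
  have h3 : c + c = ((p * (1 - q) / (1 - p * q) : ℝ) : ℂ) := by
    rw [hc, hk]
    push_cast
    field_simp [hne']
    ring
  have hcp : (M p q).charpoly =
      X * (X - C (((1 - p) * (1 - q) / (1 - p * q) : ℝ) : ℂ)) *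
        (X - C (((1 - p) * q / (1 - p * q) : ℝ) : ℂ)) *
        (X - C ((p * (1 - q) / (1 - p * q) : ℝ) : ℂ)) := by
    rw [hM, charpoly_special,
      show ((X - C a)^2 - (C b)^2) * ((X - C c)^2 - (C c)^2)
          = X * (X - (C a + C b)) * (X - (C a - C b)) * (X - (C c + C c)) by ring,
      ← map_add, ← map_sub, ← map_add, h1, h2, h3]
  refine ⟨hcp, ?_⟩
  ext z
  simp only [spec_iff_charpoly, hcp, eval_mul, eval_sub, eval_X, eval_C, mul_eq_zero,
    sub_eq_zero, Set.mem_insert_iff, Set.mem_singleton_iff]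
  clear * -
  tauto

end
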